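/- arXiv:1008.1653 — 4 statements merged into one kernel-verified Lean document; each statement's English description precedes it below -/
import Mathlib

section
/- Every integer m with 1 ≤ m < 2^k (for k ≥ 2) can be written either as a sum (2^{k_1}-1) + (2^{k_2}-1) + ⋯ + (2^{k_ℓ}-1), or as (2^{k_1}-1) + ⋯ + (2^{k_{ℓ-1}}-1) + 2·(2^{k_ℓ}-1), where 1 ≤ ℓ ≤ k-1 and k ≥ k_1 > k_2 > ⋯ > k_ℓ ≥ 1. -/
lemma strictAnti_const_fin1 (c : ℕ) : StrictAnti (fun _ : Fin 1 => c) := by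
  intro i j h
  have hi := i.is_lt
  have hj := j.is_lt
  have := Fin.lt_iff_val_lt_val.mp h
  omega

lemma strictAnti_cons_aux {n : ℕ} {f : Fin (n + 1) → ℕ} {a : ℕ}
    (hf : StrictAnti f) (ha : f 0 < a) : StrictAnti (Fin.cons a f : Fin (n + 2) → ℕ) := by
  intro i j hij
  induction j using Fin.cases with
  | zero => exact absurd hij (by simp [Fin.lt_iff_val_lt_val])
  | succ j' =>
    induction i using Fin.cases with
    | zero =>
      simp only [Fin.cons_zero, Fin.cons_succ]
      exact lt_of_le_of_lt (hf.antitone (Fin.zero_le j')) ha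
    | succ i' =>
      simp only [Fin.cons_succ]
      exact hf (Fin.succ_lt_succ_iff.mp hij)

lemma aux_decomp : ∀ n : ℕ, ∀ m : ℕ, 1 ≤ m → m ≤ 2 ^ (n + 1) - 2 →
    ∃ ℓ' : ℕ, ∃ ks : Fin (ℓ' + 1) → ℕ,
      ℓ' + 1 ≤ n ∧ StrictAnti ks ∧ ks 0 ≤ n ∧ 1 ≤ ks (Fin.last ℓ') ∧
      (m = ∑ i, (2 ^ ks i - 1) ∨
        m = (∑ i, (2 ^ ks i - 1)) + (2 ^ ks (Fin.last ℓ') - 1)) := by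
  intro n
  induction n with
  | zero => intro m hm1 hm2; omega
  | succ n ih =>
    intro m hm1 hm2
    have h2 : (2:ℕ) ≤ 2 ^ (n + 1) := Nat.one_lt_two_pow_iff.mpr (by omega)
    have h22 : (2:ℕ) ^ (n + 1 + 1) = 2 ^ (n + 1) * 2 := by ring
    rcases lt_or_ge m (2 ^ (n + 1) - 1) with hlt | hge
    · exact (ih m hm1 (by omega)).imp fun ℓ' h =>
        h.imp fun ks ⟨h1, h2, h3, h4, h5⟩ => ⟨by omega, h2, by omega, h4, h5⟩
    rcases eq_or_lt_of_le hge with heq | hgt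
    · -- m = 2^(n+1) - 1
      refine ⟨0, fun _ => n + 1, by omega, strictAnti_const_fin1 _, le_rfl, by show 1 ≤ n + 1; omega, Or.inl ?_⟩
      rw [Fin.sum_univ_one]
      show m = 2 ^ (n + 1) - 1
      omega
    rcases eq_or_lt_of_le hm2 with heq2 | hlt2
    · -- m = 2^(n+2) - 2
      refine ⟨0, fun _ => n + 1, by omega, strictAnti_const_fin1 _, le_rfl, by show 1 ≤ n + 1; omega, Or.inr ?_⟩
      rw [Fin.sum_univ_one]
      show m = (2 ^ (n + 1) - 1) + (2 ^ (n + 1) - 1)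
      omega
    · -- 2^(n+1)-1 < m < 2^(n+2)-2
      set r := m - (2 ^ (n + 1) - 1) with hr
      have hr1 : 1 ≤ r := by omega
      have hr2 : r ≤ 2 ^ (n + 1) - 2 := by omega
      obtain ⟨ℓ', ks, hℓ, hanti, hk0, hklast, hsum⟩ := ih r hr1 hr2
      refine ⟨ℓ' + 1, Fin.cons (n + 1) ks, by omega, strictAnti_cons_aux hanti (by omega),
        by simp, ?_, ?_⟩
      · have hL : Fin.last (ℓ' + 1) = (Fin.last ℓ').succ := rfl
        rw [hL, Fin.cons_succ]
        exact hklast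
      · have hsum' : ∑ i, (2 ^ (Fin.cons (n+1) ks : Fin (ℓ'+2) → ℕ) i - 1)
            = (2 ^ (n + 1) - 1) + ∑ i, (2 ^ ks i - 1) := by
          rw [Fin.sum_univ_succ]
          simp [Fin.cons_succ]
        have hlast : (Fin.cons (n+1) ks : Fin (ℓ'+2) → ℕ) (Fin.last (ℓ'+1))
            = ks (Fin.last ℓ') := by
          have hL : Fin.last (ℓ' + 1) = (Fin.last ℓ').succ := rfl
          rw [hL, Fin.cons_succ]
        rcases hsum with h | h
        · exact Or.inl (by rw [hsum']; omega)
        · exact Or.inr (by rw [hsum', hlast]; omega)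

/-- Every `m` with `1 ≤ m < 2^k` (for `k ≥ 2`) is a sum of terms `2^{k_i} - 1` with
`k ≥ k_1 > k_2 > ⋯ > k_ℓ ≥ 1`, where the last term is possibly doubled, and the
number of terms `ℓ` satisfies `1 ≤ ℓ ≤ k - 1`. Here the number of terms is `ℓ' + 1`. -/
theorem m_decomposition (k m : ℕ) (hk : 2 ≤ k) (hm1 : 1 ≤ m) (hm2 : m < 2 ^ k) :
    ∃ ℓ' : ℕ, ∃ ks : Fin (ℓ' + 1) → ℕ,
      ℓ' + 1 ≤ k - 1 ∧ StrictAnti ks ∧ ks 0 ≤ k ∧ 1 ≤ ks (Fin.last ℓ') ∧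
      (m = ∑ i, (2 ^ ks i - 1) ∨
        m = (∑ i, (2 ^ ks i - 1)) + (2 ^ ks (Fin.last ℓ') - 1)) := by
  have h2 : (2:ℕ) ≤ 2 ^ k := Nat.one_lt_two_pow_iff.mpr (by omega)
  rcases eq_or_lt_of_le (Nat.le_sub_one_of_lt hm2) with heq | hlt
  · -- m = 2^k - 1
    refine ⟨0, fun _ => k, by omega, strictAnti_const_fin1 _, le_rfl, by show 1 ≤ k; omega, Or.inl ?_⟩
    rw [Fin.sum_univ_one]
    show m = 2 ^ k - 1
    omega
  · have hk1 : k - 1 + 1 = k := by omega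
    have := aux_decomp (k - 1) m hm1 (by rw [hk1]; omega)
    exact this.imp fun ℓ' h => h.imp fun ks ⟨h1, h2, h3, h4, h5⟩ =>
      ⟨h1, h2, by omega, h4, h5⟩
end

section
/- Let L ⊆ Σ* be a nonempty prefix-free regular language with L ≠ {λ}, accepted by a minimal NFA with n states. Then any DFA accepting L has at least n+1 states. -/
open Classical in
/-- A nonempty prefix-free regular language `L ≠ {λ}` accepted by a minimal `n`-state NFA
(with a single initial state) requires at least `n + 1` states in any DFA. -/
theorem prefixFree_dfa_lower_bound {Γ : Type} {σ : Type} [Fintype σ]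
    (M : NFA Γ σ) (q0 : σ) (hstart : M.start = {q0})
    (hne : M.accepts ≠ 0) (hnlam : M.accepts ≠ 1)
    (hpf : ∀ y ∈ M.accepts, ∀ z : List Γ, z ≠ [] → y ++ z ∉ M.accepts)
    (hmin : ∀ (σ' : Type) [Fintype σ'] (N : NFA Γ σ') (p0 : σ'),
      N.start = {p0} → N.accepts = M.accepts → Fintype.card σ ≤ Fintype.card σ')
    {τ : Type} [Fintype τ] (D : DFA Γ τ) (hD : D.accepts = M.accepts) :
    Fintype.card σ + 1 ≤ Fintype.card τ := by
  classical
  -- get a word in the language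
  obtain ⟨w, hw⟩ : ∃ w, w ∈ M.accepts := by
    by_contra h
    push_neg at h
    exact hne (Set.eq_empty_iff_forall_notMem.mpr h)
  -- w is nonempty
  have hwne : w ≠ [] := by
    rintro rfl
    apply hnlam
    ext x
    constructor
    · intro hx
      rcases eq_or_ne x [] with rfl | hxne
      · rfl
      · exact absurd hx (by simpa using hpf [] hw x hxne)
    · intro hx
      have : x = [] := hx
      simpa [this] using hw
  obtain ⟨a, w', rfl⟩ : ∃ a w', w = a :: w' := by
    cases w with
    | nil => exact absurd rfl hwne
    | cons a w' => exact ⟨a, w', rfl⟩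
  set w := a :: w' with hwdef
  -- liveness predicate
  set Live : τ → Prop := fun t => ∃ x, D.evalFrom t x ∈ D.accept with hLive
  have hwD : D.eval w ∈ D.accept := by
    have : w ∈ D.accepts := hD ▸ hw
    exact this
  have hstartLive : Live D.start := ⟨w, hwD⟩
  -- the dead state
  have hdead : ¬ Live (D.eval (w ++ [a])) := by
    rintro ⟨y, hy⟩
    have : (w ++ ([a] ++ y)) ∈ D.accepts := by
      show D.eval (w ++ ([a] ++ y)) ∈ D.accept
      rw [← List.append_assoc, DFA.eval, DFA.evalFrom_of_append]
      exact hy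
    exact hpf w hw ([a] ++ y) (by simp) (hD ▸ this)
  -- the NFA on live states
  let S := {t : τ // Live t}
  let N : NFA Γ S :=
    { step := fun q b => {s | s.1 = D.step q.1 b}
      start := {⟨D.start, hstartLive⟩}
      accept := {s | s.1 ∈ D.accept} }
  have hevalN : ∀ (x : List Γ) (T : Set S) (s : S),
      s ∈ N.evalFrom T x ↔ ∃ t ∈ T, s.1 = D.evalFrom t.1 x := by
    intro x
    induction x with
    | nil =>
      intro T s
      simp only [NFA.evalFrom, List.foldl_nil, DFA.evalFrom, List.foldl_nil]
      constructor
      · intro h; exact ⟨s, h, rfl⟩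
      · rintro ⟨t, ht, h⟩
        have : s = t := Subtype.ext h
        exact this ▸ ht
    | cons b x ih =>
      intro T s
      have : N.evalFrom T (b :: x) = N.evalFrom (N.stepSet T b) x := rfl
      rw [this, ih]
      constructor
      · rintro ⟨t, ht, hts⟩
        rw [NFA.mem_stepSet] at ht
        obtain ⟨u, hu, htu⟩ := ht
        refine ⟨u, hu, ?_⟩
        have h' : t.1 = D.step u.1 b := htu
        show s.1 = D.evalFrom (D.step u.1 b) x
        rw [← h']
        exact hts
      · rintro ⟨u, hu, hs⟩
        -- D.step u.1 b is live since s is live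
        obtain ⟨y, hy⟩ := s.2
        have hlive : Live (D.step u.1 b) := by
          refine ⟨x ++ y, ?_⟩
          rw [DFA.evalFrom_of_append]
          have h' : D.evalFrom (D.step u.1 b) x = s.1 := by rw [hs]; rfl
          rw [h']
          exact hy
        refine ⟨⟨D.step u.1 b, hlive⟩, ?_, ?_⟩
        · rw [NFA.mem_stepSet]
          exact ⟨u, hu, rfl⟩
        · exact hs
  have hNacc : N.accepts = M.accepts := by
    rw [← hD]
    ext x
    constructor
    · rintro ⟨s, hs, hsx⟩
      obtain ⟨t, ht, hts⟩ := (hevalN x N.start s).mp hsx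
      have : t = ⟨D.start, hstartLive⟩ := ht
      subst this
      show D.eval x ∈ D.accept
      rw [DFA.eval, ← hts]
      exact hs
    · intro hx
      have hx' : D.eval x ∈ D.accept := hx
      have hlive : Live (D.eval x) := ⟨[], hx'⟩
      exact ⟨⟨D.eval x, hlive⟩, hx',
        (hevalN x N.start _).mpr ⟨⟨D.start, hstartLive⟩, rfl, rfl⟩⟩
  have h1 : Fintype.card σ ≤ Fintype.card S :=
    hmin S N ⟨D.start, hstartLive⟩ rfl hNacc
  have h2 : Fintype.card S < Fintype.card τ :=
    Fintype.card_subtype_lt (x := D.eval (w ++ [a])) hdead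
  omega
end

section
/- Every nonempty prefix-closed regular language is accepted by some NFA in which all states are accepting. -/
private lemma nfa_evalFrom_empty {Γ σ : Type*} (N : NFA Γ σ) (w : List Γ) :
    N.evalFrom ∅ w = ∅ := by
  induction w with
  | nil => rfl
  | cons a w ih =>
    show N.evalFrom (N.stepSet ∅ a) w = ∅
    rw [NFA.stepSet_empty]; exact ih

/-- Every nonempty prefix-closed regular language is accepted by some NFA in which
all states are accepting. -/
theorem prefixClosed_allAccepting {Γ : Type} (L : Language Γ) (hne : L ≠ 0)
    (hreg : L.IsRegular)
    (hpc : ∀ x y : List Γ, x ++ y ∈ L → x ∈ L) :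
    ∃ (σ : Type) (_ : Fintype σ) (M : NFA Γ σ) (q0 : σ),
      M.start = {q0} ∧ M.accept = Set.univ ∧ M.accepts = L := by
  classical
  obtain ⟨σ, fσ, D, hD⟩ := hreg
  -- ε ∈ L
  obtain ⟨w0, hw0⟩ : L.Nonempty := Set.nonempty_iff_ne_empty.mpr hne
  have hε : [] ∈ L := hpc [] w0 hw0
  have hstart : D.start ∈ D.accept := by
    have : [] ∈ D.accepts := hD ▸ hε
    exact this
  refine ⟨{q : σ // q ∈ D.accept}, Fintype.ofFinite _,
    { step := fun q a => {q' | q'.val = D.step q.val a},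
      start := {⟨D.start, hstart⟩},
      accept := Set.univ }, ⟨D.start, hstart⟩, rfl, rfl, ?_⟩
  set N : NFA Γ {q : σ // q ∈ D.accept} :=
    { step := fun q a => {q' | q'.val = D.step q.val a},
      start := {⟨D.start, hstart⟩},
      accept := Set.univ } with hN
  have key : ∀ (w : List Γ) (q : {q : σ // q ∈ D.accept}) (q' : {q : σ // q ∈ D.accept}),
      q' ∈ N.evalFrom {q} w ↔
        (q'.val = D.evalFrom q.val w ∧ ∀ p, p <+: w → D.evalFrom q.val p ∈ D.accept) := by
    intro w
    induction w with
    | nil =>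
      intro q q'
      simp only [NFA.evalFrom_nil, Set.mem_singleton_iff]
      constructor
      · rintro rfl
        refine ⟨rfl, ?_⟩
        intro p hp
        rw [List.prefix_nil.mp hp]
        exact q'.2
      · rintro ⟨h, -⟩
        exact Subtype.ext h
    | cons a w ih =>
      intro q q'
      have hstep : N.evalFrom {q} (a :: w) = N.evalFrom (N.stepSet {q} a) w := rfl
      have hss : N.stepSet {q} a = {q' : {q : σ // q ∈ D.accept} | q'.val = D.step q.val a} := by
        ext s; simp [NFA.mem_stepSet, hN]
      by_cases hacc : D.step q.val a ∈ D.accept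
      · have hss' : N.stepSet {q} a = {(⟨D.step q.val a, hacc⟩ : {q : σ // q ∈ D.accept})} := by
          rw [hss]; ext s; simp [Subtype.ext_iff]
        rw [hstep, hss', ih]
        constructor
        · rintro ⟨h1, h2⟩
          refine ⟨h1, ?_⟩
          intro p hp
          match p, hp with
          | [], _ => exact q.2
          | (b :: p'), hp =>
            obtain ⟨t, ht⟩ := hp
            have hb : b = a ∧ p' <+: w := by
              constructor
              · exact (List.cons.injEq .. ▸ ht).1
              · exact ⟨t, (List.cons.injEq .. ▸ ht).2⟩
            rcases hb with ⟨rfl, hp'⟩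
            exact h2 p' hp'
        · rintro ⟨h1, h2⟩
          refine ⟨h1, ?_⟩
          intro p hp
          exact h2 (a :: p) (by simpa using hp)
      · have hss' : N.stepSet {q} a = ∅ := by
          rw [hss]; ext s; simp only [Set.mem_setOf_eq, Set.mem_empty_iff_false, iff_false]
          intro h; exact hacc (h ▸ s.2)
        rw [hstep, hss', nfa_evalFrom_empty]
        simp only [Set.mem_empty_iff_false, false_iff]
        rintro ⟨-, h2⟩
        exact hacc (h2 [a] ⟨w, rfl⟩)
  ext w
  rw [NFA.mem_accepts]
  constructor
  · rintro ⟨q', -, hq'⟩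
    have := (key w ⟨D.start, hstart⟩ q').mp hq'
    have hw : D.evalFrom D.start w ∈ D.accept := this.2 w (List.prefix_refl w)
    rw [← hD]
    exact hw
  · intro hw
    have hall : ∀ p, p <+: w → D.evalFrom D.start p ∈ D.accept := by
      intro p hp
      obtain ⟨t, rfl⟩ := hp
      have : p ∈ L := hpc p t hw
      rw [← hD] at this
      exact this
    refine ⟨⟨D.evalFrom D.start w, hall w (List.prefix_refl w)⟩, Set.mem_univ _,
      (key w ⟨D.start, hstart⟩ _).mpr ⟨rfl, hall⟩⟩
end

section
/- The only infix-closed regular language whose minimal DFA has the same number of states as its minimal NFA is Σ*, and in that case both automata have exactly one state. -/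
/-- The only (nonempty) infix-closed regular language whose minimal DFA has the same
number of states as its minimal NFA is `Σ*`, and in that case both automata have
exactly one state. -/
theorem infixClosed_dfa_eq_nfa_iff_univ {Γ : Type} (L : Language Γ) (hne : L ≠ 0)
    (hic : ∀ x y z : List Γ, x ++ y ++ z ∈ L → y ∈ L)
    {σD : Type} [Fintype σD] (D : DFA Γ σD) (hD : D.accepts = L)
    (hDmin : ∀ (τ : Type) [Fintype τ] (D' : DFA Γ τ), D'.accepts = L →
      Fintype.card σD ≤ Fintype.card τ)
    {σN : Type} [Fintype σN] (N : NFA Γ σN) (q0 : σN) (hq0 : N.start = {q0})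
    (hN : N.accepts = L)
    (hNmin : ∀ (τ : Type) [Fintype τ] (N' : NFA Γ τ) (p0 : τ), N'.start = {p0} →
      N'.accepts = L → Fintype.card σN ≤ Fintype.card τ)
    (heq : Fintype.card σD = Fintype.card σN) :
    (∀ w : List Γ, w ∈ L) ∧ Fintype.card σD = 1 := by
  classical
  -- the empty word is in L
  have hnil : [] ∈ L := by
    obtain ⟨w, hw⟩ : ∃ w, w ∈ L := by
      by_contra h
      push_neg at h
      exact hne (Set.eq_empty_iff_forall_notMem.mpr h)
    simpa using hic w [] [] (by simpa using hw)
  -- live states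
  set p : σD → Prop := fun s => ∃ u : List Γ, D.evalFrom s u ∈ D.accept with hp
  have hstartlive : p D.start := ⟨[], by show [] ∈ D.accepts; rw [hD]; exact hnil⟩
  set s0 : {s : σD // p s} := ⟨D.start, hstartlive⟩ with hs0
  set N' : NFA Γ {s : σD // p s} :=
    { step := fun s a => {t | (t : σD) = D.step s.1 a}
      start := {s0}
      accept := {t | t.1 ∈ D.accept} } with hN'
  -- monotonicity of evalFrom
  have mono : ∀ (w : List Γ) (S T : Set {s : σD // p s}), S ⊆ T →
      N'.evalFrom S w ⊆ N'.evalFrom T w := by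
    intro w
    induction w with
    | nil => intro S T h; exact h
    | cons a w ih =>
      intro S T h
      refine ih _ _ (fun t ht => ?_)
      rw [NFA.mem_stepSet] at ht ⊢
      obtain ⟨s, hs, h2⟩ := ht
      exact ⟨s, h hs, h2⟩
  -- soundness
  have sound : ∀ (w : List Γ) (S : Set {s : σD // p s}) (t : {s : σD // p s}),
      t ∈ N'.evalFrom S w → ∃ s ∈ S, (t : σD) = D.evalFrom s.1 w := by
    intro w
    induction w with
    | nil => intro S t ht; exact ⟨t, ht, rfl⟩
    | cons a w ih =>
      intro S t ht
      obtain ⟨s', hs', h⟩ := ih (N'.stepSet S a) t ht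
      rw [NFA.mem_stepSet] at hs'
      obtain ⟨s, hs, hstep⟩ := hs'
      refine ⟨s, hs, ?_⟩
      have : (s' : σD) = D.step s.1 a := hstep
      simp only [DFA.evalFrom, List.foldl_cons]
      rw [h, this]
      rfl
  -- completeness
  have complete : ∀ (w : List Γ) (s : {s : σD // p s}), p (D.evalFrom s.1 w) →
      ∃ t : {s : σD // p s}, (t : σD) = D.evalFrom s.1 w ∧ t ∈ N'.evalFrom {s} w := by
    intro w
    induction w with
    | nil => intro s h; exact ⟨s, rfl, rfl⟩
    | cons a w ih =>
      intro s h
      have hlive1 : p (D.step s.1 a) := by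
        obtain ⟨u, hu⟩ := h
        refine ⟨w ++ u, ?_⟩
        rw [DFA.evalFrom_of_append]
        simpa only [DFA.evalFrom, List.foldl_cons] using hu
      obtain ⟨t, ht1, ht2⟩ := ih ⟨D.step s.1 a, hlive1⟩
        (by simpa only [DFA.evalFrom, List.foldl_cons] using h)
      refine ⟨t, ?_, ?_⟩
      · rw [ht1]; simp only [DFA.evalFrom, List.foldl_cons]
      · have hsub : ({⟨D.step s.1 a, hlive1⟩} : Set {s : σD // p s}) ⊆ N'.stepSet {s} a := by
          intro x hx
          rw [NFA.mem_stepSet]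
          exact ⟨s, rfl, by rw [Set.mem_singleton_iff] at hx; subst hx; rfl⟩
        exact mono w _ _ hsub ht2
  -- N' accepts L
  have hacc : N'.accepts = L := by
    ext w
    rw [NFA.mem_accepts]
    constructor
    · rintro ⟨t, htacc, htev⟩
      obtain ⟨s, hs, heq'⟩ := sound w N'.start t htev
      have hs' : s = s0 := hs
      rw [← hD, DFA.mem_accepts]
      have : (t : σD) = D.evalFrom D.start w := by rw [heq', hs']
      rw [DFA.eval, ← this]
      exact htacc
    · intro hw
      have h1 : D.eval w ∈ D.accept := by rw [← hD] at hw; exact hw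
      have hfin : p (D.evalFrom D.start w) := ⟨[], h1⟩
      obtain ⟨t, ht1, ht2⟩ := complete w s0 hfin
      exact ⟨t, by show t.1 ∈ D.accept; rw [ht1]; exact h1, ht2⟩
  -- all states are live
  have h1 : Fintype.card σN ≤ Fintype.card {s : σD // p s} := hNmin _ N' s0 rfl hacc
  have hall : ∀ s : σD, p s := by
    intro s
    by_contra hs
    have hlt : Fintype.card {s : σD // p s} < Fintype.card σD :=
      Fintype.card_subtype_lt (p := p) hs
    omega
  -- L = Σ*
  have huniv : ∀ w, w ∈ L := by
    intro w
    obtain ⟨u, hu⟩ := hall (D.eval w)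
    have hwu : w ++ u ∈ L := by
      rw [← hD, DFA.mem_accepts, DFA.eval, DFA.evalFrom_of_append]
      exact hu
    simpa using hic [] w u (by simpa using hwu)
  refine ⟨huniv, ?_⟩
  -- one-state DFA accepts L
  have hle : Fintype.card σD ≤ 1 := by
    have := hDmin PUnit ⟨fun _ _ => PUnit.unit, PUnit.unit, Set.univ⟩ ?_
    · simpa using this
    · ext w
      simp only [DFA.mem_accepts, Set.mem_univ, true_iff]
      exact huniv w
  have hpos : 0 < Fintype.card σD := Fintype.card_pos_iff.mpr ⟨D.start⟩
  omega
end
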